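/- Under Assumption 3.2 (all coefficients c_{i,m} are positive real numbers): ℝ_{>0}ᵈ ⊆ D, the map φ sends ℝ_{>0}ᵈ into ℝ_{>0}ⁿ, and the set of points of Y° with all coordinates positive real equals exactly φ(ℝ_{>0}ᵈ); that is, Y° ∩ ℝ_{>0}ⁿ = φ(ℝ_{>0}ᵈ). -/

import Mathlib

/-!
Statement 5: under Assumption 3.2 (all coefficients positive real), `ℝ_{>0}ᵈ ⊆ D`,
`φ(ℝ_{>0}ᵈ) ⊆ ℝ_{>0}ⁿ`, and `Y° ∩ ℝ_{>0}ⁿ = φ(ℝ_{>0}ᵈ)`.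
-/

noncomputable section

open Finset Matrix

/-- Evaluation of the Laurent monomial `t ^ m` with integer exponent vector `m`. -/
def lmon {d : ℕ} (t : Fin d → ℂ) (m : Fin d → ℤ) : ℂ := ∏ j, t j ^ m j

/-- Evaluation of the Laurent polynomial with support `S` and coefficients `c` at `t`. -/
def leval {d : ℕ} (S : Finset (Fin d → ℤ)) (c : (Fin d → ℤ) → ℂ) (t : Fin d → ℂ) : ℂ :=
  ∑ m ∈ S, c m * lmon t m

/-- The monomial map `φ_B` whose `j`-th coordinate is `t ^ bⱼ`, `bⱼ` the `j`-th column
of the integer matrix `B`. -/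
def monMap {p q : ℕ} (B : Matrix (Fin p) (Fin q) ℤ) (t : Fin p → ℂ) : Fin q → ℂ :=
  fun j => ∏ i, t i ^ B i j

/-- A complex number is a positive real. -/
def IsPosReal (z : ℂ) : Prop := z.im = 0 ∧ 0 < z.re

/-- The positive orthant `ℝ_{>0}ᵖ` inside `ℂᵖ`. -/
def posOrthant (p : ℕ) : Set (Fin p → ℂ) := {t | ∀ j, IsPosReal (t j)}

lemma isPosReal_iff {z : ℂ} : IsPosReal z ↔ ∃ r : ℝ, 0 < r ∧ z = r := by
  constructor
  · rintro ⟨h0, h1⟩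
    exact ⟨z.re, h1, by apply Complex.ext <;> simp [h0]⟩
  · rintro ⟨r, hr, rfl⟩
    exact ⟨Complex.ofReal_im r, by simpa using hr⟩

lemma isPosReal_zpow {z : ℂ} (h : IsPosReal z) (n : ℤ) : IsPosReal (z ^ n) := by
  rw [isPosReal_iff] at h ⊢
  obtain ⟨r, hr, rfl⟩ := h
  exact ⟨r ^ n, zpow_pos hr n, by push_cast; ring⟩

lemma isPosReal_mul {z w : ℂ} (hz : IsPosReal z) (hw : IsPosReal w) :
    IsPosReal (z * w) := by
  rw [isPosReal_iff] at hz hw ⊢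
  obtain ⟨r, hr, rfl⟩ := hz; obtain ⟨s, hs, rfl⟩ := hw
  exact ⟨r * s, mul_pos hr hs, by push_cast; ring⟩

lemma isPosReal_inv {z : ℂ} (hz : IsPosReal z) : IsPosReal z⁻¹ := by
  rw [isPosReal_iff] at hz ⊢
  obtain ⟨r, hr, rfl⟩ := hz
  exact ⟨r⁻¹, inv_pos.2 hr, by push_cast; ring⟩

lemma isPosReal_ne_zero {z : ℂ} (hz : IsPosReal z) : z ≠ 0 := by
  rw [isPosReal_iff] at hz
  obtain ⟨r, hr, rfl⟩ := hz
  exact_mod_cast hr.ne'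

lemma isPosReal_prod {ι : Type*} (s : Finset ι) (f : ι → ℂ)
    (h : ∀ i ∈ s, IsPosReal (f i)) : IsPosReal (∏ i ∈ s, f i) := by
  classical
  induction s using Finset.induction with
  | empty => exact ⟨by simp, by simp⟩
  | insert _ _ hni ih =>
    rw [Finset.prod_insert hni]
    exact isPosReal_mul (h _ (Finset.mem_insert_self _ _))
      (ih fun i hi => h i (Finset.mem_insert_of_mem hi))

lemma isPosReal_sum {ι : Type*} (s : Finset ι) (hs : s.Nonempty) (f : ι → ℂ)
    (h : ∀ i ∈ s, IsPosReal (f i)) : IsPosReal (∑ i ∈ s, f i) := by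
  classical
  induction s using Finset.induction with
  | empty => exact absurd hs (by simp)
  | @insert a s hni ih =>
    rcases s.eq_empty_or_nonempty with rfl | hne
    · simpa using h a (by simp)
    · rw [Finset.sum_insert hni]
      have h1 := h a (Finset.mem_insert_self _ _)
      have h2 := ih hne fun i hi => h i (Finset.mem_insert_of_mem hi)
      rw [isPosReal_iff] at h1 h2 ⊢
      obtain ⟨r, hr, hr'⟩ := h1; obtain ⟨q, hq, hq'⟩ := h2
      exact ⟨r + q, by positivity, by rw [hr', hq']; push_cast; ring⟩

lemma zpow_finset_sum {ι : Type*} {x : ℂ} (hx : x ≠ 0) (s : Finset ι) (f : ι → ℤ) :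
    x ^ (∑ i ∈ s, f i) = ∏ i ∈ s, x ^ f i := by
  classical
  induction s using Finset.induction with
  | empty => simp
  | insert _ _ hni ih => rw [Finset.sum_insert hni, Finset.prod_insert hni, zpow_add₀ hx, ih]

lemma monMap_posOrthant {p q : ℕ} (B : Matrix (Fin p) (Fin q) ℤ) {t : Fin p → ℂ}
    (ht : t ∈ posOrthant p) : monMap B t ∈ posOrthant q :=
  fun j => isPosReal_prod _ _ fun i _ => isPosReal_zpow (ht i) _

lemma monMap_one {p : ℕ} (t : Fin p → ℂ) : monMap (1 : Matrix (Fin p) (Fin p) ℤ) t = t := by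
  funext j
  unfold monMap
  rw [Finset.prod_eq_single j]
  · simp
  · intro i _ hij
    rw [Matrix.one_apply_ne hij, zpow_zero]
  · simp

lemma monMap_comp {p q r : ℕ} (A : Matrix (Fin p) (Fin q) ℤ) (B : Matrix (Fin q) (Fin r) ℤ)
    {t : Fin p → ℂ} (ht : ∀ i, t i ≠ 0) : monMap B (monMap A t) = monMap (A * B) t := by
  funext j
  unfold monMap
  calc ∏ i, (∏ l, t l ^ A l i) ^ B i j
      = ∏ i, ∏ l, t l ^ (A l i * B i j) := by
        refine Finset.prod_congr rfl fun i _ => ?_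
        rw [← Finset.prod_zpow]
        exact Finset.prod_congr rfl fun l _ => (_root_.zpow_mul _ _ _).symm
    _ = ∏ l, ∏ i, t l ^ (A l i * B i j) := Finset.prod_comm
    _ = ∏ l, t l ^ (A * B) l j := by
        refine Finset.prod_congr rfl fun l _ => ?_
        rw [Matrix.mul_apply, zpow_finset_sum (ht l)]

theorem statement5
    (d k : ℕ) (hd : 1 ≤ d) (hk : 1 ≤ k)
    -- the Laurent polynomials `f i` with nonempty support `S i`
    (S : Fin k → Finset (Fin d → ℤ)) (hS : ∀ i, (S i).Nonempty)
    (c : Fin k → (Fin d → ℤ) → ℂ)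
    -- Assumption 3.2: all coefficients `c i m` (for `m ∈ S i`) are positive reals
    (hc : ∀ i, ∀ m ∈ S i, IsPosReal (c i m))
    -- the columns `u j` of `F` and the vectors `a i` with `a i j = -min_{m ∈ S i} ⟨u j, m⟩`
    (u : Fin (d + k) → Fin d → ℤ)
    (a : Fin k → Fin (d + k) → ℤ)
    (ha_le : ∀ i j, ∀ m ∈ S i, 0 ≤ (∑ l, u j l * m l) + a i j)
    (ha_min : ∀ i j, ∃ m ∈ S i, (∑ l, u j l * m l) + a i j = 0)
    -- the unimodular matrix `M` whose first `d` rows are `F` and last `k` rows are the `a i`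
    (M : Matrix (Fin (d + k)) (Fin (d + k)) ℤ)
    (hMF : ∀ (i : Fin d) (j : Fin (d + k)), M (Fin.castAdd k i) j = u j i)
    (hMA : ∀ (i : Fin k) (j : Fin (d + k)), M (Fin.natAdd d i) j = a i j)
    (hMdet : M.det = 1 ∨ M.det = -1)
    -- the domain `D = {t ∈ (ℂ*)^d : f i (t) ≠ 0 for all i}`
    (D : Set (Fin d → ℂ))
    (hD : D = {t | (∀ j, t j ≠ 0) ∧ ∀ i, leval (S i) (c i) t ≠ 0})
    -- the graph map `Γ` and the parametrization `φ = φ_{(M⁻¹)ᵗ} ∘ Γ`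
    (Γ : (Fin d → ℂ) → Fin (d + k) → ℂ)
    (hΓ : ∀ t, Γ t = Fin.append t (fun i => (leval (S i) (c i) t)⁻¹))
    (φ : (Fin d → ℂ) → Fin (d + k) → ℂ)
    (hφ : ∀ t, φ t = monMap (M⁻¹)ᵀ (Γ t)) :
    posOrthant d ⊆ D ∧
    φ '' posOrthant d ⊆ posOrthant (d + k) ∧
    (φ '' D) ∩ posOrthant (d + k) = φ '' posOrthant d := by
  -- positivity of the Laurent polynomial values on the positive orthant
  have hlev : ∀ t ∈ posOrthant d, ∀ i, IsPosReal (leval (S i) (c i) t) := by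
    intro t ht i
    refine isPosReal_sum _ (hS i) _ fun m hm => isPosReal_mul (hc i m hm) ?_
    exact isPosReal_prod _ _ fun j _ => isPosReal_zpow (ht j) _
  have hPosD : posOrthant d ⊆ D := by
    intro t ht
    rw [hD]
    exact ⟨fun j => isPosReal_ne_zero (ht j), fun i => isPosReal_ne_zero (hlev t ht i)⟩
  -- Γ maps the positive orthant into the positive orthant
  have hΓpos : ∀ t ∈ posOrthant d, Γ t ∈ posOrthant (d + k) := by
    intro t ht j
    rw [hΓ]
    refine Fin.addCases (fun j => ?_) (fun j => ?_) j
    · rw [Fin.append_left]; exact ht j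
    · rw [Fin.append_right]; exact isPosReal_inv (hlev t ht j)
  have hφpos : φ '' posOrthant d ⊆ posOrthant (d + k) := by
    rintro y ⟨t, ht, rfl⟩
    rw [hφ]
    exact monMap_posOrthant _ (hΓpos t ht)
  refine ⟨hPosD, hφpos, ?_⟩
  apply Set.Subset.antisymm
  · rintro y ⟨⟨t, htD, rfl⟩, hy⟩
    rw [hD] at htD
    obtain ⟨ht0, htf⟩ := htD
    -- Γ t has nonvanishing coordinates
    have hΓ0 : ∀ j, Γ t j ≠ 0 := by
      intro j
      rw [hΓ]
      refine Fin.addCases (fun j => ?_) (fun j => ?_) j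
      · rw [Fin.append_left]; exact ht0 j
      · rw [Fin.append_right]; exact inv_ne_zero (htf j)
    have hunit : IsUnit M.det := by
      rcases hMdet with h | h <;> rw [h]
      · exact isUnit_one
      · exact isUnit_one.neg
    -- recover Γ t from φ t
    have key : monMap Mᵀ (φ t) = Γ t := by
      rw [hφ, monMap_comp _ _ hΓ0, ← Matrix.transpose_mul, Matrix.mul_nonsing_inv M hunit,
        Matrix.transpose_one, monMap_one]
    have hΓt : Γ t ∈ posOrthant (d + k) := by
      rw [← key]; exact monMap_posOrthant _ hy
    have htpos : t ∈ posOrthant d := by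
      intro j
      have := hΓt (Fin.castAdd k j)
      rwa [hΓ, Fin.append_left] at this
    exact ⟨t, htpos, rfl⟩
  · intro y hy
    obtain ⟨t, ht, rfl⟩ := hy
    exact ⟨⟨t, hPosD ht, rfl⟩, hφpos ⟨t, ht, rfl⟩⟩
end
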